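/- Let A : ℝⁿ → ℝᵐ be a linear map, let b ∈ ℝᵐ, and let K ⊆ ℝᵐ be a closed convex set. Assume the Slater condition: there exists ẘ ∈ ℝⁿ with Aẘ + b in the interior of K. Let Φ := {w ∈ ℝⁿ : Aw + b ∈ K} and let x ∈ Φ. Then the tangent cones satisfy T_Φ(x) = {d ∈ ℝⁿ : A d ∈ T_K(Ax + b)}. -/

import Mathlib

/-- Under the Slater condition, the tangent cone (closure of the cone of feasible
directions) to `Φ = {w : A w + b ∈ K}` at `x ∈ Φ` equals `{d : A d ∈ T_K(A x + b)}`. -/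
theorem stmt_12 {n m : ℕ}
    (A : EuclideanSpace ℝ (Fin n) →ₗ[ℝ] EuclideanSpace ℝ (Fin m))
    (b : EuclideanSpace ℝ (Fin m)) (K : Set (EuclideanSpace ℝ (Fin m)))
    (hKcl : IsClosed K) (hKcv : Convex ℝ K)
    (hSlater : ∃ w₀ : EuclideanSpace ℝ (Fin n), A w₀ + b ∈ interior K)
    (x : EuclideanSpace ℝ (Fin n)) (hx : A x + b ∈ K) :
    closure {d : EuclideanSpace ℝ (Fin n) |
        ∃ t : ℝ, 0 ≤ t ∧ ∃ ω ∈ {w : EuclideanSpace ℝ (Fin n) | A w + b ∈ K},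
          d = t • (ω - x)} =
      {d : EuclideanSpace ℝ (Fin n) |
        A d ∈ closure {v : EuclideanSpace ℝ (Fin m) |
          ∃ t : ℝ, 0 ≤ t ∧ ∃ ω ∈ K, v = t • (ω - (A x + b))}} := by
  obtain ⟨w₀, hw₀⟩ := hSlater
  have hAc : Continuous A := A.continuous_of_finiteDimensional
  set y : EuclideanSpace ℝ (Fin m) := A x + b with hy
  set SK : Set (EuclideanSpace ℝ (Fin m)) :=
    {v | ∃ t : ℝ, 0 ≤ t ∧ ∃ ω ∈ K, v = t • (ω - y)} with hSKdef
  set SΦ : Set (EuclideanSpace ℝ (Fin n)) :=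
    {d | ∃ t : ℝ, 0 ≤ t ∧ ∃ ω ∈ {w : EuclideanSpace ℝ (Fin n) | A w + b ∈ K},
      d = t • (ω - x)} with hSΦdef
  -- SK is convex
  have hSKconv : Convex ℝ SK := by
    rintro v₁ ⟨t₁, ht₁, ω₁, hω₁, rfl⟩ v₂ ⟨t₂, ht₂, ω₂, hω₂, rfl⟩ a c ha hc hac
    rcases eq_or_lt_of_le (show (0:ℝ) ≤ a * t₁ + c * t₂ by positivity) with hT | hT
    · have h1 : a * t₁ = 0 := by nlinarith [mul_nonneg ha ht₁, mul_nonneg hc ht₂]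
      have h2 : c * t₂ = 0 := by nlinarith [mul_nonneg ha ht₁, mul_nonneg hc ht₂]
      refine ⟨0, le_refl 0, ω₁, hω₁, ?_⟩
      rw [smul_smul, smul_smul, h1, h2]
      simp
    · set T : ℝ := a * t₁ + c * t₂ with hTdef
      refine ⟨T, le_of_lt hT, (a * t₁ / T) • ω₁ + (c * t₂ / T) • ω₂,
        hKcv hω₁ hω₂ (by positivity) (by positivity) (by field_simp; exact hTdef.symm), ?_⟩
      have hT0 : T ≠ 0 := ne_of_gt hT
      match_scalars <;> field_simp <;> ring
  -- forward inclusion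
  apply Set.Subset.antisymm
  · have hcl : IsClosed {d : EuclideanSpace ℝ (Fin n) | A d ∈ closure SK} :=
      (isClosed_closure).preimage hAc
    refine closure_minimal ?_ hcl
    rintro d ⟨t, ht, ω, hω, rfl⟩
    refine subset_closure ⟨t, ht, A ω + b, hω, ?_⟩
    rw [map_smul, map_sub, hy]
    module
  · intro d hd
    -- hd : A d ∈ closure SK
    -- interior point direction
    obtain ⟨ε, hε, hball⟩ := Metric.mem_nhds_iff.mp (mem_interior_iff_mem_nhds.mp hw₀)
    have hu : (A w₀ + b) - y ∈ interior SK := by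
      refine mem_interior.mpr ⟨Metric.ball ((A w₀ + b) - y) ε, ?_, Metric.isOpen_ball,
        Metric.mem_ball_self hε⟩
      intro z hz
      refine ⟨1, zero_le_one, z + y, ?_, by simp⟩
      apply hball
      simpa [Metric.mem_ball, dist_add_right] using hz
    -- d_s ∈ SΦ for s ∈ (0,1]
    have key : ∀ s ∈ Set.Ioc (0:ℝ) 1, s • (w₀ - x) + (1 - s) • d ∈ SΦ := by
      intro s hs
      have hmem : s • ((A w₀ + b) - y) + (1 - s) • (A d) ∈ SK :=
        interior_subset (hSKconv.combo_interior_closure_mem_interior hu hd hs.1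
          (by linarith [hs.2]) (by ring))
      have hAds : A (s • (w₀ - x) + (1 - s) • d) = s • ((A w₀ + b) - y) + (1 - s) • (A d) := by
        rw [map_add, map_smul, map_smul, map_sub, hy]
        congr 2
        abel
      obtain ⟨t, ht, ω, hω, heq⟩ := hmem
      rw [← hAds] at heq
      rcases eq_or_lt_of_le ht with ht0 | ht0
      · refine ⟨1, zero_le_one, x + (s • (w₀ - x) + (1 - s) • d), ?_, by module⟩
        have : A (s • (w₀ - x) + (1 - s) • d) = 0 := by rw [heq, ← ht0, zero_smul]
        show A (x + (s • (w₀ - x) + (1 - s) • d)) + b ∈ K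
        rw [map_add, this]
        simpa using hx
      · refine ⟨t, ht, x + t⁻¹ • (s • (w₀ - x) + (1 - s) • d), ?_, ?_⟩
        · show A (x + t⁻¹ • (s • (w₀ - x) + (1 - s) • d)) + b ∈ K
          rw [map_add, map_smul, heq, smul_smul, inv_mul_cancel₀ (ne_of_gt ht0), one_smul]
          have h2 : A x + b + (ω - y) = ω := by rw [hy]; abel
          rwa [add_right_comm, h2]
        · rw [add_sub_cancel_left, smul_smul, mul_inv_cancel₀ (ne_of_gt ht0), one_smul]
    -- limit as s → 0
    have htend : Filter.Tendsto (fun s : ℝ => s • (w₀ - x) + (1 - s) • d)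
        (nhdsWithin 0 (Set.Ioi 0)) (nhds d) := by
      have : Filter.Tendsto (fun s : ℝ => s • (w₀ - x) + (1 - s) • d) (nhds 0) (nhds d) := by
        have h1 : Continuous fun s : ℝ => s • (w₀ - x) + (1 - s) • d := by fun_prop
        simpa using h1.tendsto 0
      exact this.mono_left nhdsWithin_le_nhds
    refine mem_closure_of_tendsto htend ?_
    filter_upwards [Ioc_mem_nhdsGT_of_mem (Set.left_mem_Ico.mpr one_pos)] with s hs
    exact key s hs
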